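/- Let f : [0,1] → ℝ be four times continuously differentiable and α > 0. Suppose (1/α)·f''''(s) = (f'(s))²·f''(s) for all s ∈ [0,1], together with the boundary conditions f''(0) = 0, f'''(0) = 0, f'(1) = 0, f''(1) = 0. Then f is constant on [0,1]. -/

import Mathlib

open Set

theorem leading_order_flagellum_constant (f : ℝ → ℝ) (α : ℝ) (hα : 0 < α)
    (hf : ContDiff ℝ 4 f)
    (heq : ∀ s ∈ Icc (0:ℝ) 1,
      (1 / α) * iteratedDeriv 4 f s = (deriv f s) ^ 2 * iteratedDeriv 2 f s)
    (h20 : iteratedDeriv 2 f 0 = 0) (h30 : iteratedDeriv 3 f 0 = 0)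
    (h11 : deriv f 1 = 0) (h21 : iteratedDeriv 2 f 1 = 0) :
    ∀ s ∈ Icc (0:ℝ) 1, f s = f 0 := by
  -- derivatives
  have hd1 : Differentiable ℝ (iteratedDeriv 1 f) :=
    hf.differentiable_iteratedDeriv 1 (by norm_num)
  have hd2 : Differentiable ℝ (iteratedDeriv 2 f) :=
    hf.differentiable_iteratedDeriv 2 (by norm_num)
  have hd3 : Differentiable ℝ (iteratedDeriv 3 f) :=
    hf.differentiable_iteratedDeriv 3 (by norm_num)
  have hD2 : ∀ t : ℝ, HasDerivAt (iteratedDeriv 2 f) (iteratedDeriv 3 f t) t := by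
    intro t
    have := (hd2 t).hasDerivAt
    rwa [show iteratedDeriv 3 f t = deriv (iteratedDeriv 2 f) t from by
      rw [iteratedDeriv_succ]]
  have hD3 : ∀ t : ℝ, HasDerivAt (iteratedDeriv 3 f) (iteratedDeriv 4 f t) t := by
    intro t
    have := (hd3 t).hasDerivAt
    rwa [show iteratedDeriv 4 f t = deriv (iteratedDeriv 3 f) t from by
      rw [iteratedDeriv_succ]]
  have hcd : Continuous (deriv f) := hf.continuous_deriv (by norm_num)
  -- the equation in explicit form
  have heq' : ∀ s ∈ Icc (0:ℝ) 1,
      iteratedDeriv 4 f s = α * (deriv f s) ^ 2 * iteratedDeriv 2 f s := by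
    intro s hs
    have h := heq s hs
    field_simp at h
    rw [h]
  -- clamp function
  set c : ℝ → ℝ := fun t => max 0 (min t 1) with hc
  have hcmem : ∀ t, c t ∈ Icc (0:ℝ) 1 := by
    intro t
    constructor
    · exact le_max_left _ _
    · simp only [hc, max_le_iff]
      exact ⟨zero_le_one, min_le_right _ _⟩
  have hceq : ∀ t ∈ Icc (0:ℝ) 1, c t = t := by
    intro t ht
    simp only [hc]
    rw [min_eq_left ht.2, max_eq_right ht.1]
  -- coefficient q
  set q : ℝ → ℝ := fun t => α * (deriv f (c t)) ^ 2 with hq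
  -- bound on q
  obtain ⟨C, hC⟩ : ∃ C, ∀ t, |q t| ≤ C := by
    have hcomp : IsCompact (Icc (0:ℝ) 1) := isCompact_Icc
    obtain ⟨C, hC⟩ := hcomp.exists_bound_of_continuousOn
      ((continuous_abs.comp ((continuous_const.mul ((hcd.pow 2))))).continuousOn
        (s := Icc (0:ℝ) 1))
    refine ⟨C, fun t => ?_⟩
    have := hC (c t) (hcmem t)
    simpa [hq, abs_abs] using this
  have hC0 : 0 ≤ C := le_trans (abs_nonneg _) (hC 0)
  set K : NNReal := ⟨max 1 C, le_trans zero_le_one (le_max_left _ _)⟩ with hK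
  -- the vector field
  set v : ℝ → ℝ × ℝ → ℝ × ℝ := fun t p => (p.2, q t * p.1) with hv
  have hlip : ∀ t, LipschitzWith K (v t) := by
    intro t
    apply LipschitzWith.of_dist_le_mul
    intro p p'
    simp only [hv, Prod.dist_eq, Real.dist_eq]
    have hKval : (K:ℝ) = max 1 C := rfl
    rw [hKval, max_le_iff]
    have hDnn : (0:ℝ) ≤ max |p.1 - p'.1| |p.2 - p'.2| :=
      le_max_of_le_left (abs_nonneg _)
    constructor
    · calc |p.2 - p'.2| ≤ max |p.1 - p'.1| |p.2 - p'.2| := le_max_right _ _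
        _ = 1 * max |p.1 - p'.1| |p.2 - p'.2| := (one_mul _).symm
        _ ≤ max 1 C * max |p.1 - p'.1| |p.2 - p'.2| :=
            mul_le_mul_of_nonneg_right (le_max_left _ _) hDnn
    · have h1 : |q t * p.1 - q t * p'.1| = |q t| * |p.1 - p'.1| := by
        rw [← abs_mul]; ring_nf
      rw [h1]
      calc |q t| * |p.1 - p'.1| ≤ C * max |p.1 - p'.1| |p.2 - p'.2| := by
            apply mul_le_mul (hC t) (le_max_left _ _) (abs_nonneg _) hC0
        _ ≤ max 1 C * max |p.1 - p'.1| |p.2 - p'.2| :=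
            mul_le_mul_of_nonneg_right (le_max_right _ _) hDnn
  -- solution u
  set u : ℝ → ℝ × ℝ := fun t => (iteratedDeriv 2 f t, iteratedDeriv 3 f t) with hu
  have hucont : ContinuousOn u (Icc 0 1) :=
    ((hd2.continuous.prodMk hd3.continuous)).continuousOn
  have hu' : ∀ t ∈ Ico (0:ℝ) 1, HasDerivWithinAt u (v t (u t)) (Ici t) t := by
    intro t ht
    have htIcc : t ∈ Icc (0:ℝ) 1 := ⟨ht.1, le_of_lt ht.2⟩
    have h4 : iteratedDeriv 4 f t = q t * iteratedDeriv 2 f t := by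
      rw [heq' t htIcc, hq]
      simp only
      rw [hceq t htIcc]
    have : HasDerivAt u (iteratedDeriv 3 f t, iteratedDeriv 4 f t) t :=
      (hD2 t).prodMk (hD3 t)
    have hvv : v t (u t) = (iteratedDeriv 3 f t, iteratedDeriv 4 f t) := by
      simp only [hv, hu, h4]
    rw [hvv]
    exact this.hasDerivWithinAt
  -- zero solution
  have hz' : ∀ t ∈ Ico (0:ℝ) 1,
      HasDerivWithinAt (fun _ : ℝ => ((0:ℝ), (0:ℝ))) (v t ((0:ℝ), (0:ℝ))) (Ici t) t := by
    intro t _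
    have : v t ((0:ℝ), (0:ℝ)) = (0, 0) := by simp [hv]
    rw [this]
    exact (hasDerivAt_const t _).hasDerivWithinAt
  have hzero : EqOn u (fun _ => ((0:ℝ), (0:ℝ))) (Icc 0 1) := by
    apply ODE_solution_unique_of_mem_Icc_right
      (fun t _ => (hlip t).lipschitzOnWith (s := univ)) hucont hu'
      (fun t _ => mem_univ _) continuousOn_const hz' (fun t _ => mem_univ _)
    simp [hu, h20, h30]
  have h2zero : ∀ s ∈ Icc (0:ℝ) 1, iteratedDeriv 2 f s = 0 := by
    intro s hs
    have := hzero hs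
    simpa [hu] using congrArg Prod.fst this
  -- deriv f is constant hence zero
  have hd1' : ∀ x ∈ Icc (0:ℝ) 1, deriv f x = deriv f 0 := by
    apply constant_of_has_deriv_right_zero hcd.continuousOn
    intro x hx
    have hx' : x ∈ Icc (0:ℝ) 1 := ⟨hx.1, le_of_lt hx.2⟩
    have : HasDerivAt (deriv f) (iteratedDeriv 2 f x) x := by
      have h := (hd1 x).hasDerivAt
      have e : iteratedDeriv 1 f = deriv f := iteratedDeriv_one
      rw [e] at h
      have e2 : deriv (deriv f) x = iteratedDeriv 2 f x := by
        rw [iteratedDeriv_succ, e]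
      rwa [e2] at h
    rw [← h2zero x hx']
    exact this.hasDerivWithinAt
  have hd10 : deriv f 0 = 0 := by
    have := hd1' 1 ⟨zero_le_one, le_refl _⟩
    rw [h11] at this
    exact this.symm
  have hdzero : ∀ x ∈ Icc (0:ℝ) 1, deriv f x = 0 := fun x hx => (hd1' x hx).trans hd10
  -- f constant
  apply constant_of_has_deriv_right_zero hf.continuous.continuousOn
  intro x hx
  have hx' : x ∈ Icc (0:ℝ) 1 := ⟨hx.1, le_of_lt hx.2⟩
  have : HasDerivAt f (deriv f x) x := (hf.differentiable (by norm_num) x).hasDerivAt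
  rw [← hdzero x hx']
  exact this.hasDerivWithinAt
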